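/- Let p_n be a complex polynomial of degree n ≥ 1 all of whose zeros lie in the closed unit disk |z| ≤ 1. Then ‖p_n'‖_{C[−1,1]} ≥ (1/4)·‖p_n‖_{C[−1,1]}, where ‖f‖_{C[−1,1]} = max_{x∈[−1,1]} |f(x)|. -/

import Mathlib

open Polynomial Set

lemma half_le_re_inv (z : ℂ) (hz : ‖z‖ ≤ 1) (hz1 : z ≠ 1) :
    (1/2 : ℝ) ≤ ((1 - z)⁻¹).re := by
  have hw : (1 : ℂ) - z ≠ 0 := sub_ne_zero.mpr (Ne.symm hz1)
  have hns : Complex.normSq z ≤ 1 := by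
    have := Complex.sq_norm z
    nlinarith [norm_nonneg z]
  have hpos : 0 < Complex.normSq (1 - z) := Complex.normSq_pos.mpr hw
  have h1 : Complex.normSq (1 - z) = 1 - 2 * z.re + Complex.normSq z := by
    simp [Complex.normSq_apply, Complex.sub_re, Complex.sub_im]; ring
  have h2 : ((1 : ℂ) - z).re = 1 - z.re := by simp
  rw [Complex.inv_re, le_div_iff₀ hpos, h1, h2]
  nlinarith

lemma logderiv_bound : ∀ (m : ℕ) (q : Polynomial ℂ), q.natDegree = m → q ≠ 0 →
    (∀ w : ℂ, q.eval w = 0 → ‖w‖ ≤ 1) → q.eval 1 ≠ 0 →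
    (m : ℝ) / 2 ≤ (q.derivative.eval 1 / q.eval 1).re := by
  intro m
  induction m with
  | zero =>
    intro q hdeg hq hroots h1
    obtain ⟨c, rfl⟩ := Polynomial.natDegree_eq_zero.mp hdeg
    simp
  | succ k ih =>
    intro q hdeg hq hroots h1
    have hdegpos : 0 < q.degree := by
      rw [Polynomial.degree_eq_natDegree hq, hdeg]
      exact_mod_cast Nat.succ_pos k
    obtain ⟨z, hz⟩ := Complex.exists_root hdegpos
    obtain ⟨r, hr⟩ := (Polynomial.dvd_iff_isRoot.mpr hz)
    have hrne : r ≠ 0 := by rintro rfl; simp at hr; exact hq hr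
    have hXz : (X - C z) ≠ 0 := X_sub_C_ne_zero z
    have hdegr : r.natDegree = k := by
      have := Polynomial.natDegree_mul hXz hrne
      rw [← hr, hdeg, Polynomial.natDegree_X_sub_C] at this
      omega
    have hz1 : (1:ℂ) - z ≠ 0 := by
      intro h
      apply h1
      rw [hr]
      simp [show z = 1 from by linear_combination -h]
    have hr1 : r.eval 1 ≠ 0 := by
      intro h; apply h1; rw [hr]; simp [h]
    have hrroots : ∀ w : ℂ, r.eval w = 0 → ‖w‖ ≤ 1 := by
      intro w hw; apply hroots; rw [hr]; simp [hw]
    have hzabs : ‖z‖ ≤ 1 := hroots z hz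
    have key : q.derivative.eval 1 / q.eval 1
        = (1 - z)⁻¹ + r.derivative.eval 1 / r.eval 1 := by
      rw [hr, Polynomial.derivative_mul]
      simp only [Polynomial.derivative_X_sub_C, Polynomial.eval_add,
        Polynomial.eval_mul, Polynomial.eval_one, Polynomial.eval_sub,
        Polynomial.eval_X, Polynomial.eval_C, one_mul]
      field_simp
    rw [key, Complex.add_re]
    have h2 := half_le_re_inv z hzabs (by intro h; exact hz1 (by rw [h]; ring))
    have h3 := ih r hdegr hrne hrroots hr1
    push_cast
    linarith

theorem stmt17 (n : ℕ) (hn : 1 ≤ n) (p : Polynomial ℂ) (hdeg : p.natDegree = n)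
    (hroots : ∀ w : ℂ, p.eval w = 0 → ‖w‖ ≤ 1) :
    (1 / 4) * sSup ((fun x : ℝ => ‖p.eval (x : ℂ)‖) '' Icc (-1) 1) ≤
      sSup ((fun x : ℝ => ‖p.derivative.eval (x : ℂ)‖) '' Icc (-1) 1) := by
  have hpne : p ≠ 0 := by
    intro h; rw [h] at hdeg; simp at hdeg; omega
  set g : ℝ → ℝ := fun x => ‖p.derivative.eval (x : ℂ)‖ with hg
  set f : ℝ → ℝ := fun x => ‖p.eval (x : ℂ)‖ with hf
  have hcontg : Continuous g :=
    continuous_norm.comp ((p.derivative.continuous_aeval).comp Complex.continuous_ofReal)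
  have hcontf : Continuous f :=
    continuous_norm.comp ((p.continuous_aeval).comp Complex.continuous_ofReal)
  have hbddg : BddAbove (g '' Icc (-1) 1) :=
    (isCompact_Icc.image hcontg).bddAbove
  have h1mem : (1:ℝ) ∈ Icc (-1:ℝ) 1 := by constructor <;> norm_num
  have hneg : (g '' Icc (-1) 1).Nonempty := ⟨g 1, mem_image_of_mem g h1mem⟩
  set D := sSup (g '' Icc (-1) 1) with hD
  have hgleD : ∀ x ∈ Icc (-1:ℝ) 1, g x ≤ D := fun x hx =>
    le_csSup hbddg (mem_image_of_mem g hx)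
  have hD0 : 0 ≤ D := le_trans (norm_nonneg _) (hgleD 1 h1mem)
  -- |p(1)| ≤ 2 |p'(1)|
  have hp1 : ‖p.eval 1‖ ≤ 2 * ‖p.derivative.eval 1‖ := by
    by_cases h1 : p.eval 1 = 0
    · simp only [h1, norm_zero]
      positivity
    · have hlog := logderiv_bound n p hdeg hpne hroots h1
      have hre : (p.derivative.eval 1 / p.eval 1).re ≤
          ‖p.derivative.eval 1 / p.eval 1‖ := Complex.re_le_norm _
      rw [norm_div] at hre
      have hn2 : (1:ℝ)/2 ≤ (n : ℝ)/2 := by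
        have : (1:ℝ) ≤ n := by exact_mod_cast hn
        linarith
      have habs1 : 0 < ‖p.eval 1‖ := norm_pos_iff.mpr h1
      have := le_trans hn2 (le_trans hlog hre)
      rw [le_div_iff₀ habs1] at this
      linarith
  have hp1D : ‖p.eval 1‖ ≤ 2 * D := by
    have := hgleD 1 h1mem
    simp only [hg, Complex.ofReal_one] at this
    linarith
  -- MVT bound: for x in [-1,1], |p(x)| ≤ |p(1)| + 2D
  have hfle : ∀ x ∈ Icc (-1:ℝ) 1, f x ≤ 4 * D := by
    intro x hx
    have hderiv : ∀ t ∈ Icc x 1, HasDerivWithinAt (fun s : ℝ => p.eval (s : ℂ))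
        (p.derivative.eval (t : ℂ)) (Icc x 1) t := by
      intro t ht
      exact ((p.hasDerivAt (t : ℂ)).comp_ofReal).hasDerivWithinAt
    have hbound : ∀ t ∈ Ico x 1, ‖p.derivative.eval ((t : ℝ) : ℂ)‖ ≤ D := by
      intro t ht
      have : t ∈ Icc (-1:ℝ) 1 := ⟨le_trans hx.1 ht.1, le_of_lt ht.2⟩
      have := hgleD t this
      simpa [hg] using this
    have hmvt := norm_image_sub_le_of_norm_deriv_le_segment' hderiv hbound 1 ⟨hx.2, le_refl 1⟩
    have h1x : (1:ℝ) - x ≤ 2 := by linarith [hx.1]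
    have hdiff : ‖p.eval ((1:ℝ):ℂ) - p.eval ((x:ℝ):ℂ)‖ ≤ D * 2 := by
      calc ‖p.eval ((1:ℝ):ℂ) - p.eval ((x:ℝ):ℂ)‖ ≤ D * (1 - x) := by
            simpa using hmvt
        _ ≤ D * 2 := by nlinarith
    have htri : f x ≤ ‖p.eval ((1:ℝ):ℂ)‖ +
        ‖p.eval ((1:ℝ):ℂ) - p.eval ((x:ℝ):ℂ)‖ := by
      calc f x = ‖p.eval ((1:ℝ):ℂ) + (p.eval ((x:ℝ):ℂ) - p.eval ((1:ℝ):ℂ))‖ := by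
            simp [hf]
        _ ≤ ‖p.eval ((1:ℝ):ℂ)‖ +
              ‖p.eval ((x:ℝ):ℂ) - p.eval ((1:ℝ):ℂ)‖ := norm_add_le _ _
        _ = _ := by rw [norm_sub_rev]
    have : ‖p.eval ((1:ℝ):ℂ)‖ ≤ 2 * D := by
      simpa using hp1D
    linarith
  have hsup : sSup (f '' Icc (-1) 1) ≤ 4 * D := by
    apply Real.sSup_le
    · rintro y ⟨x, hx, rfl⟩
      exact hfle x hx
    · linarith
  linarith
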